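/- Let D : [0,∞) → [0,∞) be non-decreasing and right-continuous, I₁ > 0, and b* defined by D(b*) ≥ I₁ and D(b) < I₁ for 0 ≤ b < b*. Suppose the left limit D⁻(b*) := lim_{b↑b*} D(b) > 0 and D(b*) > I₁. For b₁ < b* define the two-point mixed strategy s(b₁) with weights γ(b₁) = (D(b*) − I₁)/(D(b*) − D(b₁)) on bid b₁ and γ(b*) = 1 − γ(b₁) on bid b*. Then s(b₁) obtains exactly I₁ impressions and lim_{b₁ ↑ b*} C(s(b₁)) = I₁·b* − ∫₀^{b*} D(u) du. -/
import Mathlib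


open MeasureTheory Topology

/-- With critical bid `b*` for target `I₁` (`D b* ≥ I₁`, `D b < I₁` below),
left limit `D⁻(b*) > 0` and `D b* > I₁`, the two-point mixed strategy with weight
`γ(b₁) = (D b* − I₁)/(D b* − D b₁)` on `b₁` and `1 − γ(b₁)` on `b*` obtains exactly `I₁`
impressions, and its cost tends to `I₁·b* − ∫₀^{b*} D` as `b₁ ↑ b*`. -/
theorem stmt2 (D : ℝ → ℝ) (hmono : Monotone D)
    (hrc : ∀ a : ℝ, ContinuousWithinAt D (Set.Ici a) a)
    (hnn : ∀ b, 0 ≤ D b) (I₁ : ℝ) (hI : 0 < I₁)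
    (bstar : ℝ) (hbstar : 0 ≤ bstar) (hDbstar : I₁ ≤ D bstar)
    (hcrit : ∀ b, 0 ≤ b → b < bstar → D b < I₁)
    (Dminus : ℝ) (hDminus : Filter.Tendsto D (𝓝[<] bstar) (𝓝 Dminus))
    (hDminus_pos : 0 < Dminus) (hgt : I₁ < D bstar) :
    (∀ b₁, 0 ≤ b₁ → b₁ < bstar →
      ((D bstar - I₁) / (D bstar - D b₁)) * D b₁ +
        (1 - (D bstar - I₁) / (D bstar - D b₁)) * D bstar = I₁) ∧
    Filter.Tendsto
      (fun b₁ : ℝ =>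
        ((D bstar - I₁) / (D bstar - D b₁)) * (D b₁ * b₁ - ∫ u in (0:ℝ)..b₁, D u) +
          (1 - (D bstar - I₁) / (D bstar - D b₁)) *
            (D bstar * bstar - ∫ u in (0:ℝ)..bstar, D u))
      (𝓝[<] bstar)
      (𝓝 (I₁ * bstar - ∫ u in (0:ℝ)..bstar, D u)) := by
  have hint : ∀ a b : ℝ, IntervalIntegrable D volume a b := fun a b =>
    hmono.intervalIntegrable
  constructor
  · intro b₁ hb0 hb
    have h1 : D b₁ < I₁ := hcrit b₁ hb0 hb
    have hne : D bstar - D b₁ ≠ 0 := by intro h; linarith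
    field_simp
    ring
  · set T : ℝ := I₁ * bstar - ∫ u in (0:ℝ)..bstar, D u with hT
    set cost : ℝ → ℝ := fun b₁ =>
        ((D bstar - I₁) / (D bstar - D b₁)) * (D b₁ * b₁ - ∫ u in (0:ℝ)..b₁, D u) +
          (1 - (D bstar - I₁) / (D bstar - D b₁)) *
            (D bstar * bstar - ∫ u in (0:ℝ)..bstar, D u) with hcostdef
    have hmain : ∀ b₁ ∈ Set.Iio bstar,
        T ≤ cost b₁ ∧ cost b₁ ≤ T + (D bstar - I₁) * (bstar - b₁) := by
      intro b₁ hb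
      simp only [Set.mem_Iio] at hb
      have hle : D b₁ ≤ D bstar := hmono hb.le
      have hadj : (∫ u in (0:ℝ)..b₁, D u) + (∫ u in b₁..bstar, D u)
          = ∫ u in (0:ℝ)..bstar, D u :=
        intervalIntegral.integral_add_adjacent_intervals (hint 0 b₁) (hint b₁ bstar)
      by_cases hd : D b₁ = D bstar
      · have hb0 : bstar = 0 := by
          by_contra h
          have hpos : 0 < bstar := lt_of_le_of_ne hbstar (Ne.symm h)
          rcases le_or_gt 0 b₁ with h0 | h0
          · have := hcrit b₁ h0 hb; linarith
          · have h2 := hcrit 0 le_rfl hpos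
            have h3 := hmono h0.le
            linarith
        have hcz : cost b₁ = T := by
          rw [hcostdef, hT]
          simp only [hd, sub_self, zero_div, hb0, intervalIntegral.integral_same]
          ring
        constructor
        · rw [hcz]
        · rw [hcz]
          nlinarith [hb, hgt]
      · have hlt : D b₁ < D bstar := lt_of_le_of_ne hle hd
        have hne : D bstar - D b₁ ≠ 0 := by intro h; linarith
        have hkey : ((D bstar - I₁) / (D bstar - D b₁)) * (D bstar - D b₁)
            = D bstar - I₁ := div_mul_cancel₀ _ hne
        have hg0 : 0 ≤ (D bstar - I₁) / (D bstar - D b₁) :=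
          div_nonneg (by linarith) (by linarith)
        have hE1 : D b₁ * (bstar - b₁) ≤ ∫ u in b₁..bstar, D u := by
          have h := intervalIntegral.integral_mono_on hb.le
            (intervalIntegrable_const (c := D b₁)) (hint b₁ bstar)
            (fun x hx => hmono hx.1)
          simpa [mul_comm] using h
        have hE2 : (∫ u in b₁..bstar, D u) ≤ D bstar * (bstar - b₁) := by
          have h := intervalIntegral.integral_mono_on hb.le (hint b₁ bstar)
            (intervalIntegrable_const (c := D bstar))
            (fun x hx => hmono hx.2)
          simpa [mul_comm] using h
        have hcost : cost b₁ = T + ((D bstar - I₁) / (D bstar - D b₁)) *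
            ((∫ u in b₁..bstar, D u) - D b₁ * (bstar - b₁)) := by
          rw [hcostdef, hT]
          simp only
          linear_combination (-bstar) * hkey -
            ((D bstar - I₁) / (D bstar - D b₁)) * hadj
        constructor
        · rw [hcost]
          nlinarith [mul_nonneg hg0 (show (0:ℝ) ≤ (∫ u in b₁..bstar, D u) - D b₁ * (bstar - b₁) by linarith)]
        · rw [hcost]
          have h1 : ((D bstar - I₁) / (D bstar - D b₁)) *
              ((∫ u in b₁..bstar, D u) - D b₁ * (bstar - b₁)) ≤
              ((D bstar - I₁) / (D bstar - D b₁)) * ((D bstar - D b₁) * (bstar - b₁)) :=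
            mul_le_mul_of_nonneg_left (by nlinarith) hg0
          have h2 : ((D bstar - I₁) / (D bstar - D b₁)) * ((D bstar - D b₁) * (bstar - b₁))
              = (D bstar - I₁) * (bstar - b₁) := by
            rw [← mul_assoc, hkey]
          linarith
    have hev : ∀ᶠ b₁ in 𝓝[<] bstar,
        T ≤ cost b₁ ∧ cost b₁ ≤ T + (D bstar - I₁) * (bstar - b₁) :=
      eventually_nhdsWithin_of_forall hmain
    have hup : Filter.Tendsto (fun b₁ : ℝ => T + (D bstar - I₁) * (bstar - b₁))
        (𝓝[<] bstar) (𝓝 T) := by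
      have hc : Continuous fun b₁ : ℝ => T + (D bstar - I₁) * (bstar - b₁) := by
        continuity
      have := hc.tendsto bstar
      simp only [sub_self, mul_zero, add_zero] at this
      exact this.mono_left nhdsWithin_le_nhds
    exact tendsto_of_tendsto_of_tendsto_of_le_of_le' tendsto_const_nhds hup
      (hev.mono fun x h => h.1) (hev.mono fun x h => h.2)
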